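/- The class of posets equipped with a closure operation has the superamalgamation property: for all posets A, B, C with closure operations c_A, c_B, c_C, and order embeddings f : C → A, g : C → B with f(c_C(x)) = c_A(f(x)) and g(c_C(x)) = c_B(g(x)) for all x ∈ C, there exist a poset D with a closure operation c_D and order embeddings h : A → D, k : B → D with h(c_A(a)) = c_D(h(a)) and k(c_B(b)) = c_D(k(b)), such that h ∘ f = k ∘ g; whenever h(a) = k(b) there is c ∈ C with a = f(c) and b = g(c); whenever h(a) ≤ k(b) there is c ∈ C with a ≤ f(c) and g(c) ≤ b; and whenever k(b) ≤ h(a) there is c ∈ C with b ≤ g(c) and f(c) ≤ a. -/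

import Mathlib

universe u

/-- The carrier of the amalgam: `A` plus the part of `B` outside the range of `g`. -/
def amD (A : Type u) {B C : Type u} [PartialOrder B] [PartialOrder C]
    (g : C ↪o B) : Type u :=
  A ⊕ {b : B // b ∉ Set.range g}

/-- The order on the amalgam. -/
def amLE {A B C : Type u} [PartialOrder A] [PartialOrder B] [PartialOrder C]
    (f : C ↪o A) (g : C ↪o B) : amD A g → amD A g → Prop
  | Sum.inl a, Sum.inl a' => a ≤ a'
  | Sum.inl a, Sum.inr b => ∃ c, a ≤ f c ∧ g c ≤ b.1
  | Sum.inr b, Sum.inl a => ∃ c, b.1 ≤ g c ∧ f c ≤ a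
  | Sum.inr b, Sum.inr b' => b.1 ≤ b'.1

section AmalgAux

variable {A B C : Type u} [PartialOrder A] [PartialOrder B] [PartialOrder C]

lemma amLE_refl (f : C ↪o A) (g : C ↪o B) : ∀ d, amLE f g d d
  | Sum.inl a => le_refl a
  | Sum.inr b => le_refl b.1

lemma amLE_trans (f : C ↪o A) (g : C ↪o B) :
    ∀ d e j, amLE f g d e → amLE f g e j → amLE f g d j
  | Sum.inl _, Sum.inl _, Sum.inl _, h1, h2 => le_trans h1 h2
  | Sum.inl _, Sum.inl _, Sum.inr _, h1, ⟨c, hc1, hc2⟩ => ⟨c, le_trans h1 hc1, hc2⟩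
  | Sum.inl _, Sum.inr _, Sum.inl _, ⟨_, hc1, hc2⟩, ⟨_, hc1', hc2'⟩ =>
      le_trans hc1 (le_trans (f.monotone (g.le_iff_le.mp (le_trans hc2 hc1'))) hc2')
  | Sum.inl _, Sum.inr _, Sum.inr _, ⟨c, hc1, hc2⟩, h2 => ⟨c, hc1, le_trans hc2 h2⟩
  | Sum.inr _, Sum.inl _, Sum.inl _, ⟨c, hc1, hc2⟩, h2 => ⟨c, hc1, le_trans hc2 h2⟩
  | Sum.inr _, Sum.inl _, Sum.inr _, ⟨_, hc1, hc2⟩, ⟨_, hc1', hc2'⟩ =>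
      le_trans hc1 (le_trans (g.monotone (f.le_iff_le.mp (le_trans hc2 hc1'))) hc2')
  | Sum.inr _, Sum.inr _, Sum.inl _, h1, ⟨c, hc1, hc2⟩ => ⟨c, le_trans h1 hc1, hc2⟩
  | Sum.inr _, Sum.inr _, Sum.inr _, h1, h2 => le_trans h1 h2

lemma amLE_antisymm (f : C ↪o A) (g : C ↪o B) :
    ∀ d e, amLE f g d e → amLE f g e d → d = e
  | Sum.inl a, Sum.inl a', h1, h2 => congrArg Sum.inl (le_antisymm h1 h2)
  | Sum.inl a, Sum.inr b, ⟨c, hc1, hc2⟩, ⟨c', hc1', hc2'⟩ => by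
      have hcc' : c ≤ c' := g.le_iff_le.mp (le_trans hc2 hc1')
      have hc'c : c' ≤ c := f.le_iff_le.mp (le_trans hc2' hc1)
      have : c = c' := le_antisymm hcc' hc'c
      subst this
      exact absurd ⟨c, le_antisymm hc2 hc1'⟩ b.2
  | Sum.inr b, Sum.inl a, ⟨c, hc1, hc2⟩, ⟨c', hc1', hc2'⟩ => by
      have hcc' : c ≤ c' := f.le_iff_le.mp (le_trans hc2 hc1')
      have hc'c : c' ≤ c := g.le_iff_le.mp (le_trans hc2' hc1)
      have : c = c' := le_antisymm hcc' hc'c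
      subst this
      exact absurd ⟨c, le_antisymm hc2' hc1⟩ b.2
  | Sum.inr b, Sum.inr b', h1, h2 => congrArg Sum.inr (Subtype.ext (le_antisymm h1 h2))

/-- The embedding of `B` into the amalgam. -/
noncomputable def kmap (f : C ↪o A) (g : C ↪o B) (b : B) : amD A g :=
  letI := Classical.dec (b ∈ Set.range g)
  if hb : b ∈ Set.range g then Sum.inl (f hb.choose) else Sum.inr ⟨b, hb⟩

lemma kmap_g (f : C ↪o A) (g : C ↪o B) (c : C) : kmap f g (g c) = Sum.inl (f c) := by
  have hb : (g c : B) ∈ Set.range g := ⟨c, rfl⟩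
  have hspec : g hb.choose = g c := hb.choose_spec
  have : hb.choose = c := g.injective hspec
  simp [kmap, hb, this]
  rfl

lemma kmap_not (f : C ↪o A) (g : C ↪o B) {b : B} (hb : b ∉ Set.range g) :
    kmap f g b = Sum.inr ⟨b, hb⟩ := by
  simp [kmap, hb]
  rfl

lemma le_kmap_iff (f : C ↪o A) (g : C ↪o B) (a : A) (b : B) :
    amLE f g (Sum.inl a) (kmap f g b) ↔ ∃ c, a ≤ f c ∧ g c ≤ b := by
  by_cases hb : b ∈ Set.range g
  · obtain ⟨c0, rfl⟩ := hb
    rw [kmap_g]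
    show a ≤ f c0 ↔ _
    constructor
    · exact fun h => ⟨c0, h, le_refl _⟩
    · rintro ⟨c, h1, h2⟩
      exact le_trans h1 (f.monotone (g.le_iff_le.mp h2))
  · rw [kmap_not f g hb]; exact Iff.rfl

lemma kmap_le_iff (f : C ↪o A) (g : C ↪o B) (a : A) (b : B) :
    amLE f g (kmap f g b) (Sum.inl a) ↔ ∃ c, b ≤ g c ∧ f c ≤ a := by
  by_cases hb : b ∈ Set.range g
  · obtain ⟨c0, rfl⟩ := hb
    rw [kmap_g]
    show f c0 ≤ a ↔ _
    constructor
    · exact fun h => ⟨c0, le_refl _, h⟩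
    · rintro ⟨c, h1, h2⟩
      exact le_trans (f.monotone (g.le_iff_le.mp h1)) h2
  · rw [kmap_not f g hb]; exact Iff.rfl

lemma kmap_le_kmap_iff (f : C ↪o A) (g : C ↪o B) (b b' : B) :
    amLE f g (kmap f g b) (kmap f g b') ↔ b ≤ b' := by
  by_cases hb : b ∈ Set.range g
  · obtain ⟨c0, rfl⟩ := hb
    rw [kmap_g, le_kmap_iff]
    constructor
    · rintro ⟨c, h1, h2⟩
      exact le_trans (g.monotone (f.le_iff_le.mp h1)) h2
    · exact fun h => ⟨c0, le_refl _, h⟩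
  · rw [kmap_not f g hb]
    by_cases hb' : b' ∈ Set.range g
    · obtain ⟨c0, rfl⟩ := hb'
      rw [kmap_g]
      show (∃ c, b ≤ g c ∧ f c ≤ f c0) ↔ _
      constructor
      · rintro ⟨c, h1, h2⟩
        exact le_trans h1 (g.monotone (f.le_iff_le.mp h2))
      · exact fun h => ⟨c0, h, le_refl _⟩
    · rw [kmap_not f g hb']; exact Iff.rfl

lemma inr_le_kmap (f : C ↪o A) (g : C ↪o B) {b : {b : B // b ∉ Set.range g}} {b' : B}
    (h : b.1 ≤ b') : amLE f g (Sum.inr b) (kmap f g b') := by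
  have := (kmap_le_kmap_iff f g b.1 b').mpr h
  rwa [kmap_not f g b.2] at this

/-- The closure operation on the amalgam. -/
noncomputable def amC (f : C ↪o A) (g : C ↪o B) (cA : A → A) (cB : B → B) :
    amD A g → amD A g
  | Sum.inl a => Sum.inl (cA a)
  | Sum.inr b => kmap f g (cB b.1)

end AmalgAux

/-- The class of posets equipped with a closure operation has the
superamalgamation property. -/
theorem poset_with_closure_superamalgamation {A B C : Type u}
    [PartialOrder A] [PartialOrder B] [PartialOrder C]
    (cA : A → A) (cB : B → B) (cC : C → C)
    (hAext : ∀ x, x ≤ cA x) (hAmono : Monotone cA) (hAidem : ∀ x, cA (cA x) = cA x)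
    (hBext : ∀ x, x ≤ cB x) (hBmono : Monotone cB) (hBidem : ∀ x, cB (cB x) = cB x)
    (hCext : ∀ x, x ≤ cC x) (hCmono : Monotone cC) (hCidem : ∀ x, cC (cC x) = cC x)
    (f : C ↪o A) (g : C ↪o B)
    (hfc : ∀ x, f (cC x) = cA (f x)) (hgc : ∀ x, g (cC x) = cB (g x)) :
    ∃ (D : Type u) (_ : PartialOrder D) (cD : D → D) (h : A ↪o D) (k : B ↪o D),
      (∀ x, x ≤ cD x) ∧ Monotone cD ∧ (∀ x, cD (cD x) = cD x) ∧
      (∀ a, h (cA a) = cD (h a)) ∧ (∀ b, k (cB b) = cD (k b)) ∧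
      (∀ c, h (f c) = k (g c)) ∧
      (∀ a b, h a = k b → ∃ c, a = f c ∧ b = g c) ∧
      (∀ a b, h a ≤ k b → ∃ c, a ≤ f c ∧ g c ≤ b) ∧
      (∀ a b, k b ≤ h a → ∃ c, b ≤ g c ∧ f c ≤ a) := by
  classical
  letI instD : PartialOrder (amD A g) :=
    { le := amLE f g
      le_refl := amLE_refl f g
      le_trans := amLE_trans f g
      le_antisymm := amLE_antisymm f g }
  have amC_kmap : ∀ b : B, amC f g cA cB (kmap f g b) = kmap f g (cB b) := by
    intro b
    by_cases hb : b ∈ Set.range g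
    · obtain ⟨c, rfl⟩ := hb
      rw [kmap_g]
      show Sum.inl (cA (f c)) = _
      rw [← hfc, ← hgc, kmap_g]
    · rw [kmap_not f g hb]; rfl
  refine ⟨amD A g, instD, amC f g cA cB,
    OrderEmbedding.ofMapLEIff Sum.inl (fun _ _ => Iff.rfl),
    OrderEmbedding.ofMapLEIff (kmap f g) (fun b b' => kmap_le_kmap_iff f g b b'),
    ?_, ?_, ?_, ?_, ?_, ?_, ?_, ?_, ?_⟩
  · -- extensive
    rintro (a | b)
    · exact hAext a
    · exact inr_le_kmap f g (hBext b.1)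
  · -- monotone
    rintro (a | b) (a' | b') hle
    · exact hAmono hle
    · obtain ⟨c, h1, h2⟩ := hle
      refine (le_kmap_iff f g _ _).mpr ⟨cC c, ?_, ?_⟩
      · rw [hfc]; exact hAmono h1
      · rw [hgc]; exact hBmono h2
    · obtain ⟨c, h1, h2⟩ := hle
      refine (kmap_le_iff f g _ _).mpr ⟨cC c, ?_, ?_⟩
      · rw [hgc]; exact hBmono h1
      · rw [hfc]; exact hAmono h2
    · exact (kmap_le_kmap_iff f g _ _).mpr (hBmono hle)
  · -- idempotent
    rintro (a | b)
    · exact congrArg Sum.inl (hAidem a)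
    · show amC f g cA cB (kmap f g (cB b.1)) = amC f g cA cB (Sum.inr b)
      rw [amC_kmap, hBidem]
      rfl
  · -- h commutes with closure
    intro a; rfl
  · -- k commutes with closure
    intro b
    show kmap f g (cB b) = amC f g cA cB (kmap f g b)
    rw [amC_kmap]
  · -- h ∘ f = k ∘ g
    intro c
    show Sum.inl (f c) = kmap f g (g c)
    rw [kmap_g]
  · -- strong amalgamation
    intro a b hab
    by_cases hb : b ∈ Set.range g
    · obtain ⟨c, rfl⟩ := hb
      refine ⟨c, ?_, rfl⟩
      have h2 : (Sum.inl a : amD A g) = Sum.inl (f c) := by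
        rw [← kmap_g f g c]; exact hab
      exact Sum.inl_injective h2
    · have := kmap_not f g hb
      rw [show (OrderEmbedding.ofMapLEIff (kmap f g)
        (fun b b' => kmap_le_kmap_iff f g b b') : B → amD A g) b = kmap f g b from rfl,
        this] at hab
      exact absurd hab (by intro h; cases h)
  · -- superamalgamation 1
    intro a b hab
    exact (le_kmap_iff f g a b).mp hab
  · -- superamalgamation 2
    intro a b hab
    exact (kmap_le_iff f g a b).mp hab
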